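/- Let v > r > 2 be integers and suppose a Steiner system S(2,r,v) exists, i.e., the edge set of K_v can be partitioned into k = v(v−1)/(r(r−1)) copies of K_r. If n is a positive integer divisible by v, then M(k,n) ≥ (v/r)·(n−1). -/

import Mathlib

/-- Number of edges of a finite simple graph. -/
noncomputable def edgeCnt {V : Type} [Fintype V] (G : SimpleGraph V) : ℕ :=
  G.edgeSet.ncard

/-- Number of edges of `G` with both endpoints in `X`. -/
noncomputable def inducedEdgeCnt {V : Type} [Fintype V] (G : SimpleGraph V) (X : Finset V) : ℕ :=
  {e : Sym2 V | e ∈ G.edgeSet ∧ ∀ v ∈ e, v ∈ X}.ncard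

/-- Maximum average degree of a finite simple graph. -/
noncomputable def Mad {V : Type} [Fintype V] (G : SimpleGraph V) : ℝ :=
  sSup {d : ℝ | ∃ X : Finset V, X.Nonempty ∧ d = 2 * (inducedEdgeCnt G X : ℝ) / (X.card : ℝ)}

/-- A `k`-decomposition of the complete graph `K_n`. -/
def IsKDecomp {k n : ℕ} (G : Fin k → SimpleGraph (Fin n)) : Prop :=
  (∀ i j, i ≠ j → Disjoint (G i).edgeSet (G j).edgeSet) ∧
  (⋃ i, (G i).edgeSet) = (⊤ : SimpleGraph (Fin n)).edgeSet

/-- `M(k,n)`: maximum of `Mad(G_1)+…+Mad(G_k)` over all `k`-decompositions of `K_n`. -/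
noncomputable def MSum (k n : ℕ) : ℝ :=
  sSup {s : ℝ | ∃ G : Fin k → SimpleGraph (Fin n), IsKDecomp G ∧ s = ∑ i, Mad (G i)}

/-- `M^L(k,N)`: maximum of `Mad(G_1)+…+Mad(G_k)` over all lists of `k` finite graphs
with `N` edges in total. -/
noncomputable def MSumL (k N : ℕ) : ℝ :=
  sSup {s : ℝ | ∃ (V : Fin k → Type) (hV : ∀ i, Fintype (V i)) (G : ∀ i, SimpleGraph (V i)),
    (∑ i, @edgeCnt (V i) (hV i) (G i)) = N ∧ s = ∑ i, @Mad (V i) (hV i) (G i)}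

/-- `g(m)`: maximum of `Mad(G)` over all finite simple graphs with exactly `m` edges. -/
noncomputable def gMax (m : ℕ) : ℝ :=
  sSup {d : ℝ | ∃ (V : Type) (hV : Fintype V) (G : SimpleGraph V),
    @edgeCnt V hV G = m ∧ d = @Mad V hV G}

/-- The complete graph on the vertex subset `S` inside `Fin n`. -/
def cliqueOn {n : ℕ} (S : Finset (Fin n)) : SimpleGraph (Fin n) :=
  SimpleGraph.fromRel (fun a b => a ∈ S ∧ b ∈ S)


open Finset

lemma mad_mem_le {V : Type} [Fintype V] (G : SimpleGraph V) {d : ℝ}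
    (hd : d ∈ {d : ℝ | ∃ X : Finset V, X.Nonempty ∧ d = 2 * (inducedEdgeCnt G X : ℝ) / (X.card : ℝ)}) :
    d ≤ 2 * Fintype.card (Sym2 V) := by
  classical
  obtain ⟨X, hX, rfl⟩ := hd
  have h1 : (1:ℝ) ≤ X.card := by exact_mod_cast hX.card_pos
  have h2 : inducedEdgeCnt G X ≤ Fintype.card (Sym2 V) := by
    have h := Set.ncard_le_ncard (Set.subset_univ {e : Sym2 V | e ∈ G.edgeSet ∧ ∀ v ∈ e, v ∈ X})
      Set.finite_univ
    rwa [Set.ncard_univ, Nat.card_eq_fintype_card] at h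
  calc 2 * (inducedEdgeCnt G X : ℝ) / (X.card : ℝ) ≤ 2 * (inducedEdgeCnt G X : ℝ) :=
        div_le_self (by positivity) h1
    _ ≤ 2 * Fintype.card (Sym2 V) := by
        have : (inducedEdgeCnt G X : ℝ) ≤ Fintype.card (Sym2 V) := by exact_mod_cast h2
        linarith

lemma mad_le {V : Type} [Fintype V] (G : SimpleGraph V) :
    Mad G ≤ 2 * Fintype.card (Sym2 V) :=
  Real.sSup_le (fun _ hd => mad_mem_le G hd) (by positivity)

lemma mad_ge {V : Type} [Fintype V] (G : SimpleGraph V) (X : Finset V) (hX : X.Nonempty) :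
    2 * (inducedEdgeCnt G X : ℝ) / (X.card : ℝ) ≤ Mad G :=
  le_csSup ⟨2 * Fintype.card (Sym2 V), fun _ hd => mad_mem_le G hd⟩ ⟨X, hX, rfl⟩

lemma inducedEdgeCnt_eq_edgeCnt {V : Type} [Fintype V] (G : SimpleGraph V) (X : Finset V)
    (h : ∀ x y, G.Adj x y → x ∈ X) : inducedEdgeCnt G X = edgeCnt G := by
  unfold inducedEdgeCnt edgeCnt
  congr 1
  ext e
  induction e with
  | h x y =>
    simp only [Set.mem_setOf_eq, SimpleGraph.mem_edgeSet, Sym2.mem_iff]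
    constructor
    · exact fun he => he.1
    · intro he
      refine ⟨he, ?_⟩
      rintro v (rfl | rfl)
      · exact h _ _ he
      · exact h _ _ he.symm

lemma edgeCnt_eq_card {V : Type} [Fintype V] (G : SimpleGraph V) [Fintype G.edgeSet] :
    edgeCnt G = G.edgeFinset.card := by
  unfold edgeCnt
  rw [Set.ncard_eq_toFinset_card', SimpleGraph.edgeFinset]



lemma cliqueOn_adj {n : ℕ} (S : Finset (Fin n)) (a b : Fin n) :
    (cliqueOn S).Adj a b ↔ a ≠ b ∧ a ∈ S ∧ b ∈ S := by
  simp only [cliqueOn, SimpleGraph.fromRel_adj]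
  tauto


/-- blow-up of a Steiner system `S(2,r,v)` gives a lower bound
for `M(k,n)` when `v ∣ n`. -/
theorem madSum_blowup_steiner (v r n : ℕ) (hr : 2 < r) (hv : r < v)
    (hS : ∃ S : Fin (v * (v - 1) / (r * (r - 1))) → Finset (Fin v),
      IsKDecomp (fun i => cliqueOn (S i)) ∧ ∀ i, (S i).card = r)
    (hn : 0 < n) (hdvd : v ∣ n) :
    MSum (v * (v - 1) / (r * (r - 1))) n ≥ ((v : ℝ) / (r : ℝ)) * ((n : ℝ) - 1) := by
  classical
  obtain ⟨S, ⟨hdisj, hunion⟩, hcard⟩ := hS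
  obtain ⟨m, hm⟩ := hdvd
  have hm0 : 0 < m := by
    rcases Nat.eq_zero_or_pos m with h | h
    · subst h; simp at hm; omega
    · exact h
  classical
  have hv0 : 0 < v := by omega
  -- every point is in some block
  have hex : ∀ a : Fin v, ∃ i, a ∈ S i := by
    intro a
    have hv2 : 1 < Fintype.card (Fin v) := by simpa using (by omega : 1 < v)
    obtain ⟨b, hb⟩ := Fintype.exists_ne_of_one_lt_card hv2 a
    have hmem : s(a, b) ∈ (⊤ : SimpleGraph (Fin v)).edgeSet := by
      simp [SimpleGraph.mem_edgeSet, hb.symm]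
    rw [← hunion] at hmem
    obtain ⟨_, ⟨i, rfl⟩, hi⟩ := hmem
    rw [SimpleGraph.mem_edgeSet, cliqueOn_adj] at hi
    exact ⟨i, hi.2.1⟩
  choose chosen hchosen using hex
  -- k * (r * (r-1)) = v * (v-1)
  have hclq_card : ∀ i, 2 * (cliqueOn (S i)).edgeFinset.card = r * (r - 1) := by
    intro i
    rw [← SimpleGraph.sum_degrees_eq_twice_card_edges]
    have hdeg : ∀ a : Fin v, (cliqueOn (S i)).degree a = if a ∈ S i then r - 1 else 0 := by
      intro a
      rw [SimpleGraph.degree, SimpleGraph.neighborFinset_eq_filter]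
      by_cases ha : a ∈ S i
      · rw [if_pos ha]
        have : Finset.univ.filter ((cliqueOn (S i)).Adj a) = (S i).erase a := by
          ext b
          simp [cliqueOn_adj, ha, and_comm, ne_comm]
        rw [this, card_erase_of_mem ha, hcard i]
      · rw [if_neg ha]
        have : Finset.univ.filter ((cliqueOn (S i)).Adj a) = ∅ := by
          ext b
          simp [cliqueOn_adj, ha]
        rw [this, card_empty]
    rw [Finset.sum_congr rfl (fun a _ => hdeg a)]
    rw [Finset.sum_ite_mem, Finset.univ_inter, Finset.sum_const, hcard i, smul_eq_mul]
  have htop_card : 2 * (⊤ : SimpleGraph (Fin v)).edgeFinset.card = v * (v - 1) := by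
    rw [← SimpleGraph.sum_degrees_eq_twice_card_edges]
    have hdeg : ∀ a : Fin v, (⊤ : SimpleGraph (Fin v)).degree a = v - 1 := by
      intro a
      rw [SimpleGraph.degree, SimpleGraph.neighborFinset_eq_filter]
      have : Finset.univ.filter ((⊤ : SimpleGraph (Fin v)).Adj a) = Finset.univ.erase a := by
        ext b
        simp [ne_comm]
      rw [this, card_erase_of_mem (mem_univ a), card_univ, Fintype.card_fin]
    rw [Finset.sum_congr rfl (fun a _ => hdeg a), Finset.sum_const, card_univ,
      Fintype.card_fin, smul_eq_mul]
  have hsum_edges : ∑ i, (cliqueOn (S i)).edgeFinset.card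
      = (⊤ : SimpleGraph (Fin v)).edgeFinset.card := by
    have hbU : (⊤ : SimpleGraph (Fin v)).edgeFinset
        = Finset.univ.biUnion (fun i => (cliqueOn (S i)).edgeFinset) := by
      ext e
      simp only [SimpleGraph.mem_edgeFinset, Finset.mem_biUnion, mem_univ, true_and]
      rw [← hunion]
      simp
    rw [hbU, Finset.card_biUnion]
    intro i _ j _ hij
    rw [Function.onFun, Finset.disjoint_left]
    intro e hei hej
    exact (Set.disjoint_left.mp (hdisj i j hij)) (SimpleGraph.mem_edgeFinset.mp hei)
      (SimpleGraph.mem_edgeFinset.mp hej)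
  have hkr : (v * (v - 1) / (r * (r - 1))) * (r * (r - 1)) = v * (v - 1) := by
    calc (v * (v - 1) / (r * (r - 1))) * (r * (r-1)) = ∑ _i : Fin (v * (v - 1) / (r * (r - 1))), r * (r-1) := by
          rw [Finset.sum_const, card_univ, Fintype.card_fin, smul_eq_mul]
      _ = ∑ i : Fin (v * (v - 1) / (r * (r - 1))), 2 * (cliqueOn (S i)).edgeFinset.card := by
          exact Finset.sum_congr rfl (fun i _ => (hclq_card i).symm)
      _ = 2 * ∑ i, (cliqueOn (S i)).edgeFinset.card := by rw [Finset.mul_sum]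
      _ = v * (v - 1) := by rw [hsum_edges, htop_card]
  -- the blow-up map
  have hv0' : 0 < v := hv0
  let φ : Fin n → Fin v := fun x => ⟨x.val % v, Nat.mod_lt _ hv0⟩
  have hfiber : ∀ a : Fin v, (Finset.univ.filter fun x : Fin n => φ x = a).card = m := by
    intro a
    rw [eq_comm, ← Finset.card_fin m]
    apply Finset.card_bij (fun (j : Fin m) _ => (⟨a.val + j.val * v, by
      calc a.val + j.val * v < (j.val + 1) * v := by rw [add_mul, one_mul]; omega
        _ ≤ m * v := Nat.mul_le_mul_right v j.isLt
        _ = n := by rw [hm, mul_comm]⟩ : Fin n))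
    · intro j _
      simp only [Finset.mem_filter, Finset.mem_univ, true_and, φ]
      apply Fin.ext
      simp [Nat.add_mul_mod_self_right, Nat.mod_eq_of_lt a.isLt]
    · intro j1 _ j2 _ h
      rw [Fin.mk.injEq] at h
      have h2 : j1.val * v = j2.val * v := by omega
      exact Fin.ext (Nat.eq_of_mul_eq_mul_right hv0 h2)
    · intro x hx
      simp only [Finset.mem_filter, Finset.mem_univ, true_and] at hx
      have hxa : x.val % v = a.val := Fin.val_eq_of_eq hx
      refine ⟨⟨x.val / v, ?_⟩, Finset.mem_univ _, ?_⟩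
      · rw [Nat.div_lt_iff_lt_mul hv0]
        calc x.val < n := x.isLt
          _ = m * v := by rw [hm, mul_comm]
      · apply Fin.ext
        simp only
        rw [← hxa]
        exact Nat.mod_add_div' x.val v
  -- vertex classes
  let X : Fin (v * (v - 1) / (r * (r - 1))) → Finset (Fin n) :=
    fun i => Finset.univ.filter fun x => φ x ∈ S i
  have hXcard : ∀ i, (X i).card = r * m := by
    intro i
    rw [Finset.card_eq_sum_card_fiberwise (f := φ) (s := X i) (t := S i)
      (fun x hx => (Finset.mem_filter.mp hx).2)]
    have : ∀ a ∈ S i, ((X i).filter fun x => φ x = a).card = m := by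
      intro a ha
      rw [show (X i).filter (fun x => φ x = a) = Finset.univ.filter fun x => φ x = a by
        ext x
        simp only [X, Finset.mem_filter, Finset.mem_univ, true_and, and_iff_right_iff_imp]
        rintro rfl; exact ha]
      exact hfiber a
    rw [Finset.sum_congr rfl this, Finset.sum_const, hcard i, smul_eq_mul]
  -- the blown-up graphs
  let Rel : Fin (v * (v - 1) / (r * (r - 1))) → Fin n → Fin n → Prop := fun i x y =>
    (φ x ≠ φ y ∧ φ x ∈ S i ∧ φ y ∈ S i) ∨ (φ x = φ y ∧ chosen (φ x) = i)
  let H : Fin (v * (v - 1) / (r * (r - 1))) → SimpleGraph (Fin n) :=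
    fun i => SimpleGraph.fromRel (Rel i)
  have hadj : ∀ i x y, (H i).Adj x y ↔ x ≠ y ∧ Rel i x y := by
    intro i x y
    simp only [H, SimpleGraph.fromRel_adj]
    constructor
    · rintro ⟨hxy, h | h⟩
      · exact ⟨hxy, h⟩
      · rcases h with ⟨h1, h2, h3⟩ | ⟨h1, h2⟩
        · exact ⟨hxy, Or.inl ⟨h1.symm, h3, h2⟩⟩
        · exact ⟨hxy, Or.inr ⟨h1.symm, h1 ▸ h2⟩⟩
    · exact fun ⟨hxy, h⟩ => ⟨hxy, Or.inl h⟩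
  have hdecompH : IsKDecomp (k := v * (v - 1) / (r * (r - 1))) (n := n) H := by
    constructor
    · intro i j hij
      rw [Set.disjoint_left]
      intro e
      induction e with
      | h x y =>
        intro hei hej
        rw [SimpleGraph.mem_edgeSet, hadj] at hei hej
        obtain ⟨hxy, hi⟩ := hei
        obtain ⟨_, hj⟩ := hej
        rcases hi with ⟨hne, hxi, hyi⟩ | ⟨heq, hch⟩
        · rcases hj with ⟨_, hxj, hyj⟩ | ⟨heq, _⟩
          · have h1 : s(φ x, φ y) ∈ (cliqueOn (S i)).edgeSet := by
              rw [SimpleGraph.mem_edgeSet, cliqueOn_adj]; exact ⟨hne, hxi, hyi⟩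
            have h2 : s(φ x, φ y) ∈ (cliqueOn (S j)).edgeSet := by
              rw [SimpleGraph.mem_edgeSet, cliqueOn_adj]; exact ⟨hne, hxj, hyj⟩
            exact Set.disjoint_left.mp (hdisj i j hij) h1 h2
          · exact hne heq
        · rcases hj with ⟨hne, _, _⟩ | ⟨_, hch'⟩
          · exact hne heq
          · exact hij (hch ▸ hch')
    · ext e
      induction e with
      | h x y =>
        simp only [Set.mem_iUnion, SimpleGraph.mem_edgeSet, SimpleGraph.top_adj]
        constructor
        · rintro ⟨i, hi⟩
          exact ((hadj i x y).mp hi).1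
        · intro hxy
          by_cases hφ : φ x = φ y
          · exact ⟨chosen (φ x), (hadj _ _ _).mpr ⟨hxy, Or.inr ⟨hφ, rfl⟩⟩⟩
          · have hmem : s(φ x, φ y) ∈ (⊤ : SimpleGraph (Fin v)).edgeSet := by
              rw [SimpleGraph.mem_edgeSet, SimpleGraph.top_adj]; exact hφ
            rw [← hunion] at hmem
            obtain ⟨_, ⟨i, rfl⟩, hi⟩ := hmem
            rw [SimpleGraph.mem_edgeSet, cliqueOn_adj] at hi
            exact ⟨i, (hadj _ _ _).mpr ⟨hxy, Or.inl ⟨hφ, hi.2⟩⟩⟩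
  -- counting parameters
  let sCnt : Fin (v * (v - 1) / (r * (r - 1))) → ℕ :=
    fun i => ((S i).filter fun a => chosen a = i).card
  have hs_le : ∀ i, sCnt i ≤ r := fun i => le_trans (Finset.card_filter_le _ _) (hcard i).le
  have hsum_s : ∑ i, sCnt i = v := by
    have h1 : ∀ i, sCnt i = ∑ a : Fin v, if chosen a = i then 1 else 0 := by
      intro i
      have hfe : (S i).filter (fun a => chosen a = i)
          = Finset.univ.filter (fun a => chosen a = i ∧ a ∈ S i) := by
        ext a
        simp [and_comm]
      rw [show sCnt i = ((S i).filter fun a => chosen a = i).card from rfl, hfe]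
      rw [Finset.card_filter]
      refine Finset.sum_congr rfl fun a _ => ?_
      congr 1
      simp only [eq_iff_iff, and_iff_left_iff_imp]
      rintro rfl
      exact hchosen a
    calc ∑ i, sCnt i = ∑ i, ∑ a : Fin v, if chosen a = i then 1 else 0 :=
          Finset.sum_congr rfl fun i _ => h1 i
      _ = ∑ a : Fin v, ∑ i, if chosen a = i then 1 else 0 := Finset.sum_comm
      _ = ∑ _a : Fin v, 1 := by
          refine Finset.sum_congr rfl fun a _ => ?_
          rw [Finset.sum_ite_eq]
          simp
      _ = v := by simp
  -- degrees in H i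
  have hdeg : ∀ i (x : Fin n), (H i).degree x =
      if φ x ∈ S i then (if chosen (φ x) = i then r * m - 1 else r * m - m) else 0 := by
    intro i x
    rw [SimpleGraph.degree, SimpleGraph.neighborFinset_eq_filter]
    by_cases hx : φ x ∈ S i
    · rw [if_pos hx]
      by_cases hc : chosen (φ x) = i
      · rw [if_pos hc]
        have hset : Finset.univ.filter ((H i).Adj x) = (X i).erase x := by
          ext y
          simp only [Finset.mem_filter, Finset.mem_univ, true_and, Finset.mem_erase, hadj, X]
          constructor
          · rintro ⟨hxy, ⟨_, _, hy⟩ | ⟨heq, _⟩⟩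
            · exact ⟨Ne.symm hxy, hy⟩
            · exact ⟨Ne.symm hxy, heq ▸ hx⟩
          · rintro ⟨hyx, hy⟩
            refine ⟨Ne.symm hyx, ?_⟩
            by_cases hφ : φ x = φ y
            · exact Or.inr ⟨hφ, hc⟩
            · exact Or.inl ⟨hφ, hx, hy⟩
        rw [hset, Finset.card_erase_of_mem (by simp [X]; exact hx), hXcard i]
      · rw [if_neg hc]
        have hset : Finset.univ.filter ((H i).Adj x) = (X i).filter fun y => ¬ (φ y = φ x) := by
          ext y
          simp only [Finset.mem_filter, Finset.mem_univ, true_and, hadj, X]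
          constructor
          · rintro ⟨hxy, ⟨hne, _, hy⟩ | ⟨heq, hch⟩⟩
            · exact ⟨hy, fun h => hne (h.symm)⟩
            · exact absurd (heq ▸ hch) hc
          · rintro ⟨hy, hne⟩
            have hxy : x ≠ y := fun h => hne (h ▸ rfl)
            exact ⟨hxy, Or.inl ⟨fun h => hne h.symm, hx, hy⟩⟩
        rw [hset]
        have hsplit := Finset.card_filter_add_card_filter_not
          (s := X i) (p := fun y => φ y = φ x)
        have hfib : (X i).filter (fun y => φ y = φ x) = Finset.univ.filter fun y => φ y = φ x := by
          ext y
          simp only [X, Finset.mem_filter, Finset.mem_univ, true_and, and_iff_right_iff_imp]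
          rintro h
          exact h ▸ hx
        rw [hfib, hfiber] at hsplit
        have h4 := hXcard i
        omega
    · rw [if_neg hx]
      have hset : Finset.univ.filter ((H i).Adj x) = ∅ := by
        ext y
        simp only [Finset.mem_filter, Finset.mem_univ, true_and, Finset.notMem_empty,
          iff_false, hadj]
        rintro ⟨hxy, ⟨_, hxm, _⟩ | ⟨_, hch⟩⟩
        · exact hx hxm
        · exact hx (hch ▸ hchosen (φ x))
      rw [hset, Finset.card_empty]
  -- edge count of H i
  have hedge : ∀ i, 2 * (H i).edgeFinset.card
      = m * (sCnt i * (r * m - 1) + (r - sCnt i) * (r * m - m)) := by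
    intro i
    rw [← SimpleGraph.sum_degrees_eq_twice_card_edges]
    have hsplit : ∑ x, (H i).degree x
        = ∑ a : Fin v, ∑ x ∈ Finset.univ.filter (fun x => φ x = a), (H i).degree x :=
      Finset.sum_fiberwise_of_maps_to (fun x _ => Finset.mem_univ (φ x)) _ |>.symm
    rw [hsplit]
    have hinner : ∀ a : Fin v, ∑ x ∈ Finset.univ.filter (fun x => φ x = a), (H i).degree x
        = m * (if a ∈ S i then (if chosen a = i then r * m - 1 else r * m - m) else 0) := by
      intro a
      rw [Finset.sum_congr rfl (fun x hx => ?_), Finset.sum_const, hfiber, smul_eq_mul]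
      have hxa : φ x = a := (Finset.mem_filter.mp hx).2
      rw [hdeg, hxa]
    rw [Finset.sum_congr rfl fun a _ => hinner a, ← Finset.mul_sum]
    congr 1
    rw [Finset.sum_ite_mem, Finset.univ_inter,
      ← Finset.sum_filter_add_sum_filter_not (S i) (fun a => chosen a = i)]
    rw [Finset.sum_congr rfl (fun a ha => if_pos (Finset.mem_filter.mp ha).2),
      Finset.sum_congr (M := ℕ) rfl (fun a ha => if_neg (Finset.mem_filter.mp ha).2),
      Finset.sum_const, Finset.sum_const, smul_eq_mul, smul_eq_mul]
    have hcc : ((S i).filter fun a => ¬ chosen a = i).card = r - sCnt i := by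
      have h2 := Finset.card_filter_add_card_filter_not
        (s := S i) (p := fun a => chosen a = i)
      rw [hcard i] at h2
      have h3 : sCnt i = ((S i).filter fun a => chosen a = i).card := rfl
      omega
    rw [hcc]
  -- lower bound on Mad (H i)
  have hrm0 : 0 < r * m := Nat.mul_pos (by omega) hm0
  have hmadLB : ∀ i, ((m * (sCnt i * (r * m - 1) + (r - sCnt i) * (r * m - m)) : ℕ) : ℝ)
      / ((r * m : ℕ) : ℝ) ≤ Mad (H i) := by
    intro i
    have hin : ∀ x y, (H i).Adj x y → x ∈ X i := by
      intro x y hxy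
      rw [hadj] at hxy
      simp only [X, Finset.mem_filter, Finset.mem_univ, true_and]
      rcases hxy.2 with ⟨_, hx, _⟩ | ⟨_, hch⟩
      · exact hx
      · exact hch ▸ hchosen (φ x)
    have hne : (X i).Nonempty := Finset.card_pos.mp (by rw [hXcard i]; exact hrm0)
    have h1 := mad_ge (H i) (X i) hne
    rw [inducedEdgeCnt_eq_edgeCnt _ _ hin, edgeCnt_eq_card, hXcard i] at h1
    calc ((m * (sCnt i * (r * m - 1) + (r - sCnt i) * (r * m - m)) : ℕ) : ℝ) / ((r * m : ℕ) : ℝ)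
        = 2 * ((H i).edgeFinset.card : ℝ) / ((r * m : ℕ) : ℝ) := by
          rw [← hedge i]; push_cast; ring
      _ ≤ Mad (H i) := h1
  -- the sum of lower bounds equals the target
  have hrm1 : 1 ≤ r * m := hrm0
  have hmrm : m ≤ r * m := Nat.le_mul_of_pos_left m (by omega)
  have hkrR : ((v * (v - 1) / (r * (r - 1)) : ℕ) : ℝ) * ((r : ℝ) * ((r : ℝ) - 1))
      = (v : ℝ) * ((v : ℝ) - 1) := by
    have := congrArg (Nat.cast : ℕ → ℝ) hkr
    push_cast [Nat.cast_sub (by omega : 1 ≤ r), Nat.cast_sub (by omega : 1 ≤ v)] at this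
    linarith [this]
  have hsum_sR : ∑ i, ((sCnt i : ℝ)) = (v : ℝ) := by
    exact_mod_cast congrArg (Nat.cast : ℕ → ℝ) hsum_s
  have hT : ∑ i, ((m * (sCnt i * (r * m - 1) + (r - sCnt i) * (r * m - m)) : ℕ) : ℝ)
      / ((r * m : ℕ) : ℝ) = ((v : ℝ) / (r : ℝ)) * ((n : ℝ) - 1) := by
    have hcast : ∀ i, ((m * (sCnt i * (r * m - 1) + (r - sCnt i) * (r * m - m)) : ℕ) : ℝ)
        = (m : ℝ) * ((m : ℝ) - 1) * (sCnt i : ℝ)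
          + (m : ℝ) * (r : ℝ) * ((r : ℝ) * (m : ℝ) - (m : ℝ)) := by
      intro i
      push_cast [Nat.cast_sub (hs_le i), Nat.cast_sub hrm1, Nat.cast_sub hmrm]
      ring
    rw [← Finset.sum_div, Finset.sum_congr rfl fun i _ => hcast i,
      Finset.sum_add_distrib, ← Finset.mul_sum, hsum_sR, Finset.sum_const,
      Finset.card_univ, Fintype.card_fin, nsmul_eq_mul]
    have hrR : (r : ℝ) ≠ 0 := by positivity
    have hmR : (m : ℝ) ≠ 0 := by
      have : (0:ℝ) < m := by exact_mod_cast hm0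
      positivity
    have hnR : (n : ℝ) = (v : ℝ) * (m : ℝ) := by exact_mod_cast hm
    rw [hnR]
    push_cast
    field_simp
    linear_combination ((m:ℝ)) * hkrR
  -- conclude
  have hBdd : BddAbove {s : ℝ | ∃ G : Fin (v * (v - 1) / (r * (r - 1))) → SimpleGraph (Fin n),
      IsKDecomp G ∧ s = ∑ i, Mad (G i)} := by
    refine ⟨((v * (v - 1) / (r * (r - 1)) : ℕ) : ℝ) * (2 * Fintype.card (Sym2 (Fin n))), ?_⟩
    rintro s ⟨G, _, rfl⟩
    calc ∑ i, Mad (G i) ≤ ∑ _i : Fin (v * (v - 1) / (r * (r - 1))),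
          (2 * Fintype.card (Sym2 (Fin n)) : ℝ) :=
        Finset.sum_le_sum fun i _ => mad_le (G i)
      _ = ((v * (v - 1) / (r * (r - 1)) : ℕ) : ℝ) * (2 * Fintype.card (Sym2 (Fin n))) := by
        rw [Finset.sum_const, Finset.card_univ, Fintype.card_fin, nsmul_eq_mul]
  have hmem : (∑ i, Mad (H i)) ∈ {s : ℝ | ∃ G : Fin (v * (v - 1) / (r * (r - 1))) → SimpleGraph (Fin n),
      IsKDecomp G ∧ s = ∑ i, Mad (G i)} := ⟨H, hdecompH, rfl⟩
  calc ((v : ℝ) / (r : ℝ)) * ((n : ℝ) - 1)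
      = ∑ i, ((m * (sCnt i * (r * m - 1) + (r - sCnt i) * (r * m - m)) : ℕ) : ℝ)
        / ((r * m : ℕ) : ℝ) := hT.symm
    _ ≤ ∑ i, Mad (H i) := Finset.sum_le_sum fun i _ => hmadLB i
    _ ≤ MSum (v * (v - 1) / (r * (r - 1))) n := le_csSup hBdd hmem
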